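/- Let S be an additively divisible semiring (commutative, possibly without neutral elements) with at least two elements, and suppose S is additively cancellative: a + c = b + c implies a = b for all a, b, c ∈ S. Then S is not finitely generated. -/

import Mathlib

/-- `nmul n a` is the `n`-fold sum `a + ⋯ + a` (for `n ≥ 1`; `nmul 0 a = a` is junk). -/
def nmul {S : Type*} [Add S] (n : ℕ) (a : S) : S :=
  Nat.rec a (fun _ b => b + a) (n - 1)

/-- The subsemiring generated by `A`: the smallest subset of `S` containing `A`
and closed under addition and multiplication. -/
def genClosure {S : Type*} [Add S] [Mul S] (A : Set S) : Set S :=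
  ⋂₀ {T : Set S | A ⊆ T ∧ (∀ x ∈ T, ∀ y ∈ T, x + y ∈ T) ∧ (∀ x ∈ T, ∀ y ∈ T, x * y ∈ T)}


section GrothendieckRing

variable {S : Type*} [AddCommSemigroup S]

/-- The difference relation on `S × S`. -/
def grel (x y : S × S) : Prop := x.1 + y.2 = y.1 + x.2

/-- The Grothendieck group of differences. -/
def GR (S : Type*) [AddCommSemigroup S] : Type _ := Quot (@grel S _)

def GR.mk (x : S × S) : GR S := Quot.mk _ x

lemma GR.ind {motive : GR S → Prop} (h : ∀ x, motive (GR.mk x)) : ∀ q, motive q :=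
  Quot.ind h

lemma GR.sound {x y : S × S} (h : x.1 + y.2 = y.1 + x.2) : GR.mk x = GR.mk y :=
  Quot.sound h

def gadd : GR S → GR S → GR S :=
  Quot.map₂ (fun x y => (x.1 + y.1, x.2 + y.2))
    (fun x y y' (h : y.1 + y'.2 = y'.1 + y.2) => show (x.1 + y.1) + (x.2 + y'.2) = (x.1 + y'.1) + (x.2 + y.2) by
      calc (x.1 + y.1) + (x.2 + y'.2) = (y.1 + y'.2) + (x.1 + x.2) := by ac_rfl
        _ = (y'.1 + y.2) + (x.1 + x.2) := by rw [h]
        _ = (x.1 + y'.1) + (x.2 + y.2) := by ac_rfl)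
    (fun x x' y (h : x.1 + x'.2 = x'.1 + x.2) => show (x.1 + y.1) + (x'.2 + y.2) = (x'.1 + y.1) + (x.2 + y.2) by
      calc (x.1 + y.1) + (x'.2 + y.2) = (x.1 + x'.2) + (y.1 + y.2) := by ac_rfl
        _ = (x'.1 + x.2) + (y.1 + y.2) := by rw [h]
        _ = (x'.1 + y.1) + (x.2 + y.2) := by ac_rfl)

def gneg : GR S → GR S :=
  Quot.map (fun x => (x.2, x.1))
    (fun x y (h : x.1 + y.2 = y.1 + x.2) => show x.2 + y.1 = y.2 + x.1 by
      rw [add_comm x.2 y.1, add_comm y.2 x.1]; exact h.symm)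

@[simp] lemma gadd_mk (x y : S × S) :
    gadd (GR.mk x) (GR.mk y) = GR.mk (x.1 + y.1, x.2 + y.2) := rfl

@[simp] lemma gneg_mk (x : S × S) : gneg (GR.mk x) = GR.mk (x.2, x.1) := rfl

lemma g_add_assoc (a b c : GR S) : gadd (gadd a b) c = gadd a (gadd b c) := by
  induction a using GR.ind with | _ x =>
  induction b using GR.ind with | _ y =>
  induction c using GR.ind with | _ z =>
  simp only [gadd_mk]
  exact congrArg GR.mk (Prod.ext (by dsimp; ac_rfl) (by dsimp; ac_rfl))

lemma g_add_comm (a b : GR S) : gadd a b = gadd b a := by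
  induction a using GR.ind with | _ x =>
  induction b using GR.ind with | _ y =>
  simp only [gadd_mk]
  exact congrArg GR.mk (Prod.ext (by dsimp; ac_rfl) (by dsimp; ac_rfl))

lemma g_zero_add (e : S) (a : GR S) : gadd (GR.mk (e, e)) a = a := by
  induction a using GR.ind with | _ x =>
  simp only [gadd_mk]
  exact GR.sound (show (e + x.1) + x.2 = x.1 + (e + x.2) by ac_rfl)

lemma g_add_zero (e : S) (a : GR S) : gadd a (GR.mk (e, e)) = a := by
  induction a using GR.ind with | _ x =>
  simp only [gadd_mk]
  exact GR.sound (show (x.1 + e) + x.2 = x.1 + (x.2 + e) by ac_rfl)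

lemma g_neg_add_cancel (e : S) (a : GR S) : gadd (gneg a) a = GR.mk (e, e) := by
  induction a using GR.ind with | _ x =>
  simp only [gneg_mk, gadd_mk]
  exact GR.sound (show (x.2 + x.1) + e = e + (x.1 + x.2) by ac_rfl)

variable {T : Type*} [AddCommSemigroup T] [CommSemigroup T]
variable (hdl : ∀ a b c : T, a * (b + c) = a * b + a * c)
variable (hdr : ∀ a b c : T, (a + b) * c = a * c + b * c)

def gmul : GR T → GR T → GR T :=
  Quot.map₂ (fun x y => (x.1 * y.1 + x.2 * y.2, x.1 * y.2 + x.2 * y.1))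
    (fun x y y' (h : y.1 + y'.2 = y'.1 + y.2) => by
      have h1 : x.1 * y.1 + x.1 * y'.2 = x.1 * y'.1 + x.1 * y.2 := by rw [← hdl, ← hdl, h]
      have h2 : x.2 * y.1 + x.2 * y'.2 = x.2 * y'.1 + x.2 * y.2 := by rw [← hdl, ← hdl, h]
      show (x.1 * y.1 + x.2 * y.2) + (x.1 * y'.2 + x.2 * y'.1)
          = (x.1 * y'.1 + x.2 * y'.2) + (x.1 * y.2 + x.2 * y.1)
      calc (x.1 * y.1 + x.2 * y.2) + (x.1 * y'.2 + x.2 * y'.1)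
          = (x.1 * y.1 + x.1 * y'.2) + (x.2 * y'.1 + x.2 * y.2) := by ac_rfl
        _ = (x.1 * y'.1 + x.1 * y.2) + (x.2 * y'.1 + x.2 * y.2) := by rw [h1]
        _ = (x.1 * y'.1 + x.1 * y.2) + (x.2 * y.1 + x.2 * y'.2) := by
              rw [show x.2 * y'.1 + x.2 * y.2 = x.2 * y.1 + x.2 * y'.2 from h2.symm]
        _ = (x.1 * y'.1 + x.2 * y'.2) + (x.1 * y.2 + x.2 * y.1) := by ac_rfl)
    (fun x x' y (h : x.1 + x'.2 = x'.1 + x.2) => by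
      have h1 : x.1 * y.1 + x'.2 * y.1 = x'.1 * y.1 + x.2 * y.1 := by rw [← hdr, ← hdr, h]
      have h2 : x.1 * y.2 + x'.2 * y.2 = x'.1 * y.2 + x.2 * y.2 := by rw [← hdr, ← hdr, h]
      show (x.1 * y.1 + x.2 * y.2) + (x'.1 * y.2 + x'.2 * y.1)
          = (x'.1 * y.1 + x'.2 * y.2) + (x.1 * y.2 + x.2 * y.1)
      calc (x.1 * y.1 + x.2 * y.2) + (x'.1 * y.2 + x'.2 * y.1)
          = (x.1 * y.1 + x'.2 * y.1) + (x'.1 * y.2 + x.2 * y.2) := by ac_rfl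
        _ = (x'.1 * y.1 + x.2 * y.1) + (x'.1 * y.2 + x.2 * y.2) := by rw [h1]
        _ = (x'.1 * y.1 + x.2 * y.1) + (x.1 * y.2 + x'.2 * y.2) := by rw [← h2]
        _ = (x'.1 * y.1 + x'.2 * y.2) + (x.1 * y.2 + x.2 * y.1) := by ac_rfl)

@[simp] lemma gmul_mk (x y : T × T) :
    gmul hdl hdr (GR.mk x) (GR.mk y)
      = GR.mk (x.1 * y.1 + x.2 * y.2, x.1 * y.2 + x.2 * y.1) := rfl

lemma g_mul_assoc (a b c : GR T) :
    gmul hdl hdr (gmul hdl hdr a b) c = gmul hdl hdr a (gmul hdl hdr b c) := by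
  induction a using GR.ind with | _ x =>
  induction b using GR.ind with | _ y =>
  induction c using GR.ind with | _ z =>
  simp only [gmul_mk]
  refine congrArg GR.mk (Prod.ext ?_ ?_) <;> dsimp <;>
    simp only [hdl, hdr, mul_assoc] <;> ac_rfl

lemma g_mul_comm (a b : GR T) : gmul hdl hdr a b = gmul hdl hdr b a := by
  induction a using GR.ind with | _ x =>
  induction b using GR.ind with | _ y =>
  simp only [gmul_mk]
  refine congrArg GR.mk (Prod.ext ?_ ?_) <;> dsimp <;>
    simp only [mul_comm x.1, mul_comm x.2] <;> ac_rfl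

lemma g_ldistrib (a b c : GR T) :
    gmul hdl hdr a (gadd b c) = gadd (gmul hdl hdr a b) (gmul hdl hdr a c) := by
  induction a using GR.ind with | _ x =>
  induction b using GR.ind with | _ y =>
  induction c using GR.ind with | _ z =>
  simp only [gmul_mk, gadd_mk]
  refine congrArg GR.mk (Prod.ext ?_ ?_) <;> dsimp <;> simp only [hdl] <;> ac_rfl

lemma g_rdistrib (a b c : GR T) :
    gmul hdl hdr (gadd a b) c = gadd (gmul hdl hdr a c) (gmul hdl hdr b c) := by
  induction a using GR.ind with | _ x =>
  induction b using GR.ind with | _ y =>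
  induction c using GR.ind with | _ z =>
  simp only [gmul_mk, gadd_mk]
  refine congrArg GR.mk (Prod.ext ?_ ?_) <;> dsimp <;> simp only [hdr] <;> ac_rfl

lemma g_zero_mul (e : T) (a : GR T) : gmul hdl hdr (GR.mk (e, e)) a = GR.mk (e, e) := by
  induction a using GR.ind with | _ x =>
  simp only [gmul_mk]
  exact GR.sound (show (e * x.1 + e * x.2) + e = e + (e * x.2 + e * x.1) by ac_rfl)

lemma g_mul_zero (e : T) (a : GR T) : gmul hdl hdr a (GR.mk (e, e)) = GR.mk (e, e) := by
  induction a using GR.ind with | _ x =>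
  simp only [gmul_mk]
  exact GR.sound (show (x.1 * e + x.2 * e) + e = e + (x.1 * e + x.2 * e) by ac_rfl)

def grRing (e : T) : NonUnitalCommRing (GR T) :=
  letI : Add (GR T) := ⟨gadd⟩
  letI : Zero (GR T) := ⟨GR.mk (e, e)⟩
  letI : Neg (GR T) := ⟨gneg⟩
  { add := gadd
    add_assoc := g_add_assoc
    zero := GR.mk (e, e)
    zero_add := g_zero_add e
    add_zero := g_add_zero e
    nsmul := nsmulRec
    neg := gneg
    zsmul := zsmulRec
    neg_add_cancel := g_neg_add_cancel e
    add_comm := g_add_comm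
    mul := gmul hdl hdr
    left_distrib := g_ldistrib hdl hdr
    right_distrib := g_rdistrib hdl hdr
    zero_mul := g_zero_mul hdl hdr e
    mul_zero := g_mul_zero hdl hdr e
    mul_assoc := g_mul_assoc hdl hdr
    mul_comm := g_mul_comm hdl hdr }

end GrothendieckRing

section Sigma

variable {S : Type*} [AddCommSemigroup S]

/-- The canonical map `S → GR S`, `a ↦ [a + a, a]` (i.e. "the difference `a`"). -/
def gsigma (a : S) : GR S := GR.mk (a + a, a)

lemma gsigma_add (a b : S) : gsigma (a + b) = gadd (gsigma a) (gsigma b) := by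
  rw [gsigma, gsigma, gsigma, gadd_mk]
  exact GR.sound (show ((a+b)+(a+b)) + (a+b) = ((a+a)+(b+b)) + (a+b) by ac_rfl)

lemma gsigma_inj (hcanc : ∀ a b c : S, a + c = b + c → a = b) {a b : S}
    (h : gsigma a = gsigma b) : a = b := by
  have hequiv : Equivalence (@grel S _) := by
    constructor
    · intro x; rfl
    · intro x y hxy
      exact hxy.symm
    · intro x y z hxy hyz
      show x.1 + z.2 = z.1 + x.2
      apply hcanc _ _ y.2
      calc x.1 + z.2 + y.2 = (x.1 + y.2) + z.2 := by ac_rfl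
        _ = (y.1 + x.2) + z.2 := by rw [hxy]
        _ = (y.1 + z.2) + x.2 := by ac_rfl
        _ = (z.1 + y.2) + x.2 := by rw [hyz]
        _ = (z.1 + x.2) + y.2 := by ac_rfl
  have hrel : grel ((a + a : S), a) ((b + b : S), b) :=
    hequiv.eqvGen_iff.mp (Quot.eqvGen_exact h)
  have h2 : (a + a) + b = (b + b) + a := hrel
  apply hcanc a b (a + b)
  calc a + (a + b) = (a + a) + b := by ac_rfl
    _ = (b + b) + a := h2
    _ = b + (a + b) := by ac_rfl

lemma gmk_eq (x y : S) : GR.mk ((x, y) : S × S) = gadd (gsigma x) (gneg (gsigma y)) := by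
  rw [gsigma, gsigma, gneg_mk, gadd_mk]
  exact GR.sound (show x + (x + (y + y)) = ((x + x) + y) + y by ac_rfl)

variable [CommSemigroup S]
variable (hdl : ∀ a b c : S, a * (b + c) = a * b + a * c)
variable (hdr : ∀ a b c : S, (a + b) * c = a * c + b * c)

lemma gsigma_mul (a b : S) : gsigma (a * b) = gmul hdl hdr (gsigma a) (gsigma b) := by
  rw [gsigma, gsigma, gsigma, gmul_mk]
  exact GR.sound (by
    show (a*b + a*b) + ((a+a)*b + a*(b+b)) = ((a+a)*(b+b) + a*b) + (a*b)
    simp only [hdl, hdr]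
    ac_rfl)

end Sigma

lemma nmul_one {S : Type*} [Add S] (a : S) : nmul 1 a = a := rfl

lemma nmul_succ {S : Type*} [Add S] {n : ℕ} (hn : 1 ≤ n) (a : S) :
    nmul (n + 1) a = nmul n a + a := by
  obtain ⟨k, rfl⟩ : ∃ k, n = k + 1 := ⟨n - 1, by omega⟩
  rfl

instance : IsJacobsonRing ℤ := by
  rw [isJacobsonRing_iff_prime_eq]
  intro P hP
  refine le_antisymm ?_ Ideal.le_jacobson
  by_cases hb : P = ⊥
  · subst hb
    intro x hx
    rw [Ideal.mem_bot]
    by_contra hx0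
    obtain ⟨p, hple, hp⟩ := Nat.exists_infinite_primes (x.natAbs + 1)
    have hpZ : Prime (p : ℤ) := Int.prime_iff_natAbs_prime.mpr (by simpa using hp)
    have hm : (Ideal.span {(p : ℤ)}).IsMaximal :=
      PrincipalIdealRing.isMaximal_of_irreducible hpZ.irreducible
    have hxp : x ∈ Ideal.span {(p : ℤ)} :=
      Ideal.mem_sInf.mp hx (show _ ∈ {J : Ideal ℤ | ⊥ ≤ J ∧ J.IsMaximal} from ⟨bot_le, hm⟩)
    rw [Ideal.mem_span_singleton] at hxp
    have hdvd : p ∣ x.natAbs := by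
      rw [← Int.natAbs_natCast p]
      exact Int.natAbs_dvd_natAbs.mpr hxp
    have := Nat.le_of_dvd (Int.natAbs_pos.mpr hx0) hdvd
    omega
  · exact sInf_le ⟨le_refl P, IsPrime.to_maximal_ideal hb⟩


set_option maxHeartbeats 2000000 in
set_option synthInstance.maxHeartbeats 400000 in
lemma endgame {Γ : Type*} [NonUnitalCommRing Γ]
    (hNoeth : IsNoetherianRing (Unitization ℤ Γ))
    (hFT : Algebra.FiniteType ℤ (Unitization ℤ Γ)) (D : Ideal (Unitization ℤ Γ))
    (hdiv : ∀ n : ℕ, 1 ≤ n → D ≤ Ideal.span {(n : Unitization ℤ Γ)} • D)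
    (hne : D ≠ ⊥) : False := by
  set R := Unitization ℤ Γ with hR
  letI : CommRing R := inferInstance
  haveI := hFT
  haveI := hNoeth
  have hDfg : D.FG := IsNoetherian.noetherian D
  have hann : ∀ n : ℕ, 1 ≤ n → ∃ u : R, 1 - (n : R) * u ∈ D.annihilator := by
    intro n hn
    obtain ⟨r, hrI, hr⟩ :=
      Submodule.exists_mem_and_smul_eq_self_of_fg_of_le_smul _ D hDfg (hdiv n hn)
    obtain ⟨u, hu⟩ := Ideal.mem_span_singleton'.mp hrI
    refine ⟨u, Submodule.mem_annihilator.mpr fun x hx => ?_⟩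
    have hx' := hr x hx
    rw [sub_smul, one_smul]
    rw [show (n : R) * u = r by rw [← hu]; ring, hx', sub_self]
  set J := D.annihilator with hJ
  have hJne : J ≠ ⊤ := by
    intro hJt
    apply hne
    rw [eq_bot_iff]
    intro x hx
    have h1 : (1 : R) ∈ J := hJt ▸ Submodule.mem_top
    have h0 := Submodule.mem_annihilator.mp h1 _ hx
    rw [one_smul] at h0
    simpa using h0
  haveI : Nontrivial (R ⧸ J) := Ideal.Quotient.nontrivial_iff.mpr hJne
  haveI hFT0 : Algebra.FiniteType ℤ (R ⧸ J) :=
    Algebra.FiniteType.of_surjective (Ideal.Quotient.mkₐ ℤ J)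
      (Ideal.Quotient.mkₐ_surjective ℤ J)
  obtain ⟨m, hm⟩ := Ideal.exists_maximal (R ⧸ J)
  haveI := hm
  haveI hFTK : Algebra.FiniteType ℤ ((R ⧸ J) ⧸ m) :=
    Algebra.FiniteType.of_surjective (Ideal.Quotient.mkₐ ℤ m)
      (Ideal.Quotient.mkₐ_surjective ℤ m)
  have hKunit : ∀ n : ℕ, 1 ≤ n → IsUnit ((n : (R ⧸ J) ⧸ m)) := by
    intro n hn
    obtain ⟨u, hu⟩ := hann n hn
    have h0 : (Ideal.Quotient.mk J) (1 - (n : R) * u) = 0 :=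
      Ideal.Quotient.eq_zero_iff_mem.mpr hu
    rw [map_sub, map_mul, map_one, map_natCast, sub_eq_zero] at h0
    have h2 := congrArg (Ideal.Quotient.mk m) h0
    rw [map_one, map_mul, map_natCast] at h2
    exact ⟨⟨_, _, h2.symm, (@mul_comm _ (@Ideal.Quotient.commRing _ (Ideal.Quotient.commRing J) m).toCommMagma _ _).trans h2.symm⟩, rfl⟩
  letI : Field ((R ⧸ J) ⧸ m) := Ideal.Quotient.field m
  haveI := finite_of_finite_type_of_isJacobsonRing ℤ ((R ⧸ J) ⧸ m)
  haveI : Algebra.IsIntegral ℤ ((R ⧸ J) ⧸ m) := Algebra.IsIntegral.of_finite ℤ _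
  obtain ⟨q, hq⟩ := CharP.exists ((R ⧸ J) ⧸ m)
  cases q with
  | zero =>
    haveI : CharP ((R ⧸ J) ⧸ m) 0 := hq
    haveI : CharZero ((R ⧸ J) ⧸ m) := CharP.charP_to_charZero _
    haveI : IsScalarTower ℤ ℚ ((R ⧸ J) ⧸ m) :=
      IsScalarTower.of_algebraMap_eq fun x => by
        rw [eq_intCast, eq_intCast, map_intCast]
    have hint : IsIntegral ℤ ((2 : ℚ)⁻¹) := by
      have h1 : IsIntegral ℤ (algebraMap ℚ ((R ⧸ J) ⧸ m) (2 : ℚ)⁻¹) :=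
        Algebra.IsIntegral.isIntegral _
      exact IsIntegral.tower_bot (algebraMap ℚ ((R ⧸ J) ⧸ m)).injective h1
    letI : IsIntegrallyClosed ℤ := GCDMonoid.toIsIntegrallyClosed
    obtain ⟨y, hy⟩ := IsIntegrallyClosed.isIntegral_iff.mp hint
    rw [eq_intCast] at hy
    have h2 : ((2 * y : ℤ) : ℚ) = 1 := by push_cast [hy]; norm_num
    have h3 : (2 * y : ℤ) = 1 := by exact_mod_cast h2
    omega
  | succ n =>
    haveI : CharP ((R ⧸ J) ⧸ m) (n + 1) := hq
    have h0 : ((n + 1 : ℕ) : (R ⧸ J) ⧸ m) = 0 := CharP.cast_eq_zero _ (n + 1)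
    have h1 := hKunit (n + 1) (by omega)
    rw [h0] at h1
    exact not_isUnit_zero h1

theorem stmt_14 {S : Type*} [AddCommSemigroup S] [CommSemigroup S]
    (hdl : ∀ a b c : S, a * (b + c) = a * b + a * c)
    (hdr : ∀ a b c : S, (a + b) * c = a * c + b * c)
    (hdiv : ∀ a : S, ∀ n : ℕ, 1 ≤ n → ∃ b : S, nmul n b = a)
    (hnontriv : ∃ a b : S, a ≠ b)
    (hcanc : ∀ a b c : S, a + c = b + c → a = b) :
    ¬ ∃ A : Set S, A.Finite ∧ genClosure A = Set.univ := by
  rintro ⟨A, hAfin, hgen⟩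
  obtain ⟨a₀, b₀, hab⟩ := hnontriv
  letI ringGR : NonUnitalCommRing (GR S) := grRing hdl hdr a₀
  have hadd : ∀ u v : GR S, gadd u v = u + v := fun _ _ => rfl
  have hneg : ∀ u : GR S, gneg u = -u := fun _ => rfl
  have hmul : ∀ u v : GR S, gmul hdl hdr u v = u * v := fun _ _ => rfl
  let R := Unitization ℤ (GR S)
  letI : CommRing R := inferInstance
  let ι : S → R := fun a => Unitization.inr (gsigma a)
  have ιadd : ∀ a b : S, ι (a + b) = ι a + ι b := by
    intro a b
    show (Unitization.inr (gsigma (a + b)) : R) = _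
    rw [gsigma_add, hadd, Unitization.inr_add]
  have ιmul : ∀ a b : S, ι (a * b) = ι a * ι b := by
    intro a b
    show (Unitization.inr (gsigma (a * b)) : R) = _
    rw [gsigma_mul hdl hdr, hmul, Unitization.inr_mul]
  have ιinj : Function.Injective ι := fun a b h =>
    gsigma_inj hcanc (Unitization.inr_injective h)
  have ιnmul : ∀ n : ℕ, 1 ≤ n → ∀ b : S, ι (nmul n b) = (n : R) * ι b := by
    intro n hn
    induction n with
    | zero => omega
    | succ k ih =>
      intro b
      by_cases hk : k = 0
      · subst hk
        show ι (nmul 1 b) = ((1 : ℕ) : R) * ι b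
        rw [nmul_one, Nat.cast_one, one_mul]
      · have hk1 : 1 ≤ k := by omega
        rw [nmul_succ hk1, ιadd, ih hk1]
        push_cast
        ring
  -- finite generation of R as ℤ-algebra
  have hadj : ∀ x : S, ι x ∈ Algebra.adjoin ℤ (ι '' A) := by
    intro x
    have hsub : genClosure A ⊆ {y : S | ι y ∈ Algebra.adjoin ℤ (ι '' A)} := by
      apply Set.sInter_subset_of_mem
      refine ⟨fun a ha => Algebra.subset_adjoin ⟨a, ha, rfl⟩, ?_, ?_⟩
      · intro u hu v hv
        simp only [Set.mem_setOf_eq] at *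
        rw [ιadd]
        exact add_mem hu hv
      · intro u hu v hv
        simp only [Set.mem_setOf_eq] at *
        rw [ιmul]
        exact mul_mem hu hv
    exact hsub (hgen ▸ Set.mem_univ x)
  haveI hFT : Algebra.FiniteType ℤ R := by
    refine ⟨⟨(hAfin.image ι).toFinset, ?_⟩⟩
    rw [Set.Finite.coe_toFinset]
    rw [eq_top_iff]
    rintro r -
    rw [← Unitization.inl_fst_add_inr_snd_eq r]
    apply add_mem
    · have : (Unitization.inl r.fst : R) = algebraMap ℤ R r.fst := by
        rw [Unitization.algebraMap_eq_inl]
      rw [this]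
      exact Subalgebra.algebraMap_mem _ _
    · induction r.snd using GR.ind with
      | _ x =>
        have : GR.mk x = gadd (gsigma x.1) (gneg (gsigma x.2)) := by
          obtain ⟨x1, x2⟩ := x
          exact gmk_eq x1 x2
        rw [this, hneg, hadd, ← sub_eq_add_neg, Unitization.inr_sub]
        exact sub_mem (hadj x.1) (hadj x.2)
  have hNoeth : IsNoetherianRing R := Algebra.FiniteType.isNoetherianRing ℤ R
  refine endgame hNoeth hFT (Ideal.span (Set.range ι)) ?_ ?_
  · intro n hn
    rw [Ideal.span_le]
    rintro _ ⟨a, rfl⟩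
    obtain ⟨b, hb⟩ := hdiv a n hn
    have heq : ι a = (n : R) * ι b := by rw [← hb]; exact ιnmul n hn b
    have : ι a ∈ Ideal.span {(n : R)} • Ideal.span (Set.range ι) := by
      rw [heq, ← smul_eq_mul]
      exact Submodule.smul_mem_smul (Ideal.mem_span_singleton_self _)
        (Ideal.subset_span ⟨b, rfl⟩)
    exact this
  · intro hbot
    have hx : ι a₀ - ι b₀ ∈ Ideal.span (Set.range ι) :=
      sub_mem (Ideal.subset_span ⟨a₀, rfl⟩) (Ideal.subset_span ⟨b₀, rfl⟩)
    rw [hbot, Ideal.mem_bot, sub_eq_zero] at hx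
    exact hab (ιinj hx)
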